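/- Let 0 < q < 1, s ∈ ℝ and n ≥ 1. Then H_{n+1}(x,s|q) = x·H_n(x,s|q) - s·{n}_q·q^{n-1}·H_{n-1}(x,s|q) as polynomials in x. -/
import Mathlib


/-- The q-number `{n}_q = 1 + q + ⋯ + q^{n-1}`. -/
noncomputable def qNum (q : ℝ) (n : ℕ) : ℝ := ∑ k ∈ Finset.range n, q ^ k

/-- The q-factorial `{n}_q! = Π_{k=1}^n {k}_q`. -/
noncomputable def qFact (q : ℝ) (n : ℕ) : ℝ := ∏ k ∈ Finset.range n, qNum q (k + 1)

/-- The even q-double factorial `{2k}_q!! = Π_{l=1}^k {2l}_q`. -/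
noncomputable def qDoubleFact (q : ℝ) (k : ℕ) : ℝ := ∏ l ∈ Finset.range k, qNum q (2 * (l + 1))

/-- The q-Hermite polynomial `H_n(x,s|q) = Σ_{k=0}^{⌊n/2⌋} (-1)^k q^{k(k-1)}
({n}_q!/({n-2k}_q!·{2k}_q!!)) s^k x^{n-2k}`. -/
noncomputable def qHermite (q s : ℝ) (n : ℕ) : Polynomial ℝ :=
  ∑ k ∈ Finset.range (n / 2 + 1),
    Polynomial.C ((-1 : ℝ) ^ k * q ^ (k * (k - 1)) *
        (qFact q n / (qFact q (n - 2 * k) * qDoubleFact q k)) * s ^ k) *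
      Polynomial.X ^ (n - 2 * k)

/-- The q-derivative on polynomials: it sends `x^j` to `{j}_q x^{j-1}`. -/
noncomputable def qDeriv (q : ℝ) (f : Polynomial ℝ) : Polynomial ℝ :=
  f.sum fun j a => Polynomial.C (a * qNum q j) * Polynomial.X ^ (j - 1)

open Polynomial Finset

noncomputable def cc (q : ℝ) (m k : ℕ) : ℝ :=
  (-1 : ℝ) ^ k * q ^ (k * (k - 1)) * (qFact q m / (qFact q (m - 2 * k) * qDoubleFact q k))

lemma qNum_pos {q : ℝ} (hq : 0 < q) (n : ℕ) (hn : 1 ≤ n) : 0 < qNum q n := by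
  unfold qNum
  apply Finset.sum_pos (fun k _ => pow_pos hq k)
  simpa [Finset.nonempty_range_iff] using Nat.one_le_iff_ne_zero.mp hn

lemma qFact_pos {q : ℝ} (hq : 0 < q) (n : ℕ) : 0 < qFact q n := by
  unfold qFact
  exact Finset.prod_pos fun k _ => qNum_pos hq _ (by omega)

lemma qDoubleFact_pos {q : ℝ} (hq : 0 < q) (n : ℕ) : 0 < qDoubleFact q n := by
  unfold qDoubleFact
  exact Finset.prod_pos fun k _ => qNum_pos hq _ (by omega)

lemma qNum_add (q : ℝ) (a b : ℕ) : qNum q (a + b) = qNum q a + q ^ a * qNum q b := by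
  unfold qNum
  rw [Finset.sum_range_add]
  simp [pow_add, Finset.mul_sum]

lemma qFact_succ (q : ℝ) (n : ℕ) : qFact q (n + 1) = qFact q n * qNum q (n + 1) :=
  Finset.prod_range_succ _ _

lemma qDoubleFact_succ (q : ℝ) (k : ℕ) :
    qDoubleFact q (k + 1) = qDoubleFact q k * qNum q (2 * k + 2) := by
  unfold qDoubleFact
  rw [Finset.prod_range_succ, show 2 * (k + 1) = 2 * k + 2 by ring]

lemma cc_zero {q : ℝ} (hq : 0 < q) (n : ℕ) : cc q n 0 = 1 := by
  unfold cc
  simp [qDoubleFact, div_self (ne_of_gt (qFact_pos hq n))]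

lemma key (q : ℝ) (hq : 0 < q) (d j : ℕ) :
    cc q (d + 2 * j + 3) (j + 1) =
      cc q (d + 2 * j + 2) (j + 1) -
        qNum q (d + 2 * j + 2) * q ^ (d + 2 * j + 1) * cc q (d + 2 * j + 1) j := by
  have e4 : (j + 1) * (j + 1 - 1) = j * (j - 1) + 2 * j := by
    cases j with
    | zero => simp
    | succ i => simp only [Nat.succ_sub_one]; ring
  have hnum : qNum q (d + 2 * j + 1 + 1 + 1) = qNum q (d + 1) + q ^ (d + 1) * qNum q (2 * j + 2) := by
    rw [show d + 2 * j + 1 + 1 + 1 = (d + 1) + (2 * j + 2) by omega, qNum_add]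
  unfold cc
  rw [show d + 2 * j + 3 - 2 * (j + 1) = d + 1 by omega,
      show d + 2 * j + 2 - 2 * (j + 1) = d by omega,
      show d + 2 * j + 1 - 2 * j = d + 1 by omega, e4]
  simp only [show d + 2 * j + 3 = d + 2 * j + 1 + 1 + 1 by omega,
      show d + 2 * j + 2 = d + 2 * j + 1 + 1 by omega]
  simp only [qFact_succ, qDoubleFact_succ]
  rw [hnum]
  have h1 : qFact q d ≠ 0 := ne_of_gt (qFact_pos hq d)
  have h2 : qDoubleFact q j ≠ 0 := ne_of_gt (qDoubleFact_pos hq j)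
  have h3 : qNum q (d + 1) ≠ 0 := ne_of_gt (qNum_pos hq _ (by omega))
  have h4 : qNum q (2 * j + 2) ≠ 0 := ne_of_gt (qNum_pos hq _ (by omega))
  have h5 : qNum q (d + 2 * j + 1 + 1) ≠ 0 := ne_of_gt (qNum_pos hq _ (by omega))
  field_simp
  ring

lemma keyB (q : ℝ) (hq : 0 < q) (m : ℕ) :
    cc q (2 * m + 2) (m + 1) = -(qNum q (2 * m + 1) * q ^ (2 * m) * cc q (2 * m) m) := by
  have e4 : (m + 1) * (m + 1 - 1) = m * (m - 1) + 2 * m := by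
    cases m with
    | zero => simp
    | succ i => simp only [Nat.succ_sub_one]; ring
  unfold cc
  rw [show 2 * m + 2 - 2 * (m + 1) = 0 by omega, show 2 * m - 2 * m = 0 by omega, e4]
  simp only [show (2 : ℕ) * m + 2 = 2 * m + 1 + 1 by omega]
  simp only [qFact_succ, qDoubleFact_succ, show 2 * m + 2 = 2 * m + 1 + 1 by omega]
  have h2 : qDoubleFact q m ≠ 0 := ne_of_gt (qDoubleFact_pos hq m)
  have h5 : qNum q (2 * m + 1 + 1) ≠ 0 := ne_of_gt (qNum_pos hq _ (by omega))
  have h0 : qFact q 0 = 1 := by simp [qFact]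
  rw [h0]
  field_simp
  ring

lemma qHermite_eq (q s : ℝ) (n : ℕ) :
    qHermite q s n = ∑ k ∈ Finset.range (n / 2 + 1),
      C (cc q n k * s ^ k) * X ^ (n - 2 * k) := rfl

/-- Three-term recursion: `H_{n+1}(x,s|q) = x·H_n(x,s|q) - s·{n}_q·q^{n-1}·H_{n-1}(x,s|q)`. -/
theorem qHermite_recursion (q : ℝ) (hq0 : 0 < q) (hq1 : q < 1) (s : ℝ) (n : ℕ) (hn : 1 ≤ n) :
    qHermite q s (n + 1) =
      Polynomial.X * qHermite q s n -
        Polynomial.C (s * qNum q n * q ^ (n - 1)) * qHermite q s (n - 1) := by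
  obtain ⟨N, rfl⟩ : ∃ N, n = N + 1 := ⟨n - 1, by omega⟩
  simp only [Nat.add_sub_cancel]
  rcases Nat.even_or_odd N with ⟨m, rfl⟩ | ⟨m, rfl⟩
  · simp only [show m + m = 2 * m by ring]
    rw [qHermite_eq, qHermite_eq, qHermite_eq,
        show (2 * m + 1 + 1) / 2 + 1 = m + 2 by omega,
        show (2 * m + 1) / 2 + 1 = m + 1 by omega,
        show (2 * m) / 2 + 1 = m + 1 by omega,
        Finset.mul_sum, Finset.mul_sum,
        Finset.sum_range_succ, Finset.sum_range_succ', Finset.sum_range_succ',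
        Finset.sum_range_succ]
    simp only [show 2 * m + 1 + 1 = 2 * m + 2 by omega]
    have h0 : Polynomial.C (cc q (2 * m + 2) 0 * s ^ 0) * Polynomial.X ^ (2 * m + 2 - 2 * 0) =
        Polynomial.X * (Polynomial.C (cc q (2 * m + 1) 0 * s ^ 0) * Polynomial.X ^ (2 * m + 1 - 2 * 0)) := by
      rw [cc_zero hq0, cc_zero hq0, show 2 * m + 2 - 2 * 0 = (2 * m + 1 - 2 * 0) + 1 by omega, pow_succ]
      ring
    have hend : Polynomial.C (cc q (2 * m + 2) (m + 1) * s ^ (m + 1)) * Polynomial.X ^ (2 * m + 2 - 2 * (m + 1)) =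
        -(Polynomial.C (s * qNum q (2 * m + 1) * q ^ (2 * m)) *
          (Polynomial.C (cc q (2 * m) m * s ^ m) * Polynomial.X ^ (2 * m - 2 * m))) := by
      have hs : cc q (2 * m + 2) (m + 1) * s ^ (m + 1) =
          -((s * qNum q (2 * m + 1) * q ^ (2 * m)) * (cc q (2 * m) m * s ^ m)) := by
        rw [keyB q hq0 m]; ring
      rw [show 2 * m + 2 - 2 * (m + 1) = 0 by omega, show 2 * m - 2 * m = 0 by omega, hs,
        map_neg, map_mul]
      ring
    have hj : ∀ k ∈ Finset.range m,
        Polynomial.C (cc q (2 * m + 2) (k + 1) * s ^ (k + 1)) * Polynomial.X ^ (2 * m + 2 - 2 * (k + 1)) =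
          Polynomial.X * (Polynomial.C (cc q (2 * m + 1) (k + 1) * s ^ (k + 1)) *
              Polynomial.X ^ (2 * m + 1 - 2 * (k + 1))) -
            Polynomial.C (s * qNum q (2 * m + 1) * q ^ (2 * m)) *
              (Polynomial.C (cc q (2 * m) k * s ^ k) * Polynomial.X ^ (2 * m - 2 * k)) := by
      intro k hk
      rw [Finset.mem_range] at hk
      obtain ⟨d, rfl⟩ : ∃ d, m = k + d + 1 := ⟨m - k - 1, by omega⟩
      have hk2 := key q hq0 (2 * d + 1) k
      simp only [show 2 * d + 1 + 2 * k + 3 = 2 * (k + d + 1) + 2 by omega,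
        show 2 * d + 1 + 2 * k + 2 = 2 * (k + d + 1) + 1 by omega,
        show 2 * d + 1 + 2 * k + 1 = 2 * (k + d + 1) by omega] at hk2
      have hs : cc q (2 * (k + d + 1) + 2) (k + 1) * s ^ (k + 1) =
          cc q (2 * (k + d + 1) + 1) (k + 1) * s ^ (k + 1) -
            (s * qNum q (2 * (k + d + 1) + 1) * q ^ (2 * (k + d + 1))) *
              (cc q (2 * (k + d + 1)) k * s ^ k) := by
        linear_combination s ^ (k + 1) * hk2
      have hC : (Polynomial.C (cc q (2 * (k + d + 1) + 2) (k + 1) * s ^ (k + 1)) : Polynomial ℝ) =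
          Polynomial.C (cc q (2 * (k + d + 1) + 1) (k + 1) * s ^ (k + 1)) -
            Polynomial.C (s * qNum q (2 * (k + d + 1) + 1) * q ^ (2 * (k + d + 1))) *
              Polynomial.C (cc q (2 * (k + d + 1)) k * s ^ k) := by
        rw [← map_mul, ← map_sub]; exact congrArg _ hs
      rw [show 2 * (k + d + 1) + 2 - 2 * (k + 1) = 2 * d + 2 by omega,
          show 2 * (k + d + 1) + 1 - 2 * (k + 1) = 2 * d + 1 by omega,
          show 2 * (k + d + 1) - 2 * k = 2 * d + 2 by omega]
      linear_combination (Polynomial.X : Polynomial ℝ) ^ (2 * d + 2) * hC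
    have hsum := Finset.sum_congr rfl hj
    rw [Finset.sum_sub_distrib] at hsum
    linear_combination hsum + h0 + hend
  · rw [qHermite_eq, qHermite_eq, qHermite_eq,
        show (2 * m + 1 + 1 + 1) / 2 + 1 = m + 2 by omega,
        show (2 * m + 1 + 1) / 2 + 1 = m + 2 by omega,
        show (2 * m + 1) / 2 + 1 = m + 1 by omega,
        Finset.mul_sum, Finset.mul_sum,
        Finset.sum_range_succ']
    nth_rw 2 [Finset.sum_range_succ']
    simp only [show 2 * m + 1 + 1 + 1 = 2 * m + 3 by omega, show 2 * m + 1 + 1 = 2 * m + 2 by omega]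
    have h0 : Polynomial.C (cc q (2 * m + 3) 0 * s ^ 0) * Polynomial.X ^ (2 * m + 3 - 2 * 0) =
        Polynomial.X * (Polynomial.C (cc q (2 * m + 2) 0 * s ^ 0) * Polynomial.X ^ (2 * m + 2 - 2 * 0)) := by
      rw [cc_zero hq0, cc_zero hq0, show 2 * m + 3 - 2 * 0 = (2 * m + 2 - 2 * 0) + 1 by omega, pow_succ]
      ring
    have hj : ∀ k ∈ Finset.range (m + 1),
        Polynomial.C (cc q (2 * m + 3) (k + 1) * s ^ (k + 1)) * Polynomial.X ^ (2 * m + 3 - 2 * (k + 1)) =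
          Polynomial.X * (Polynomial.C (cc q (2 * m + 2) (k + 1) * s ^ (k + 1)) *
              Polynomial.X ^ (2 * m + 2 - 2 * (k + 1))) -
            Polynomial.C (s * qNum q (2 * m + 2) * q ^ (2 * m + 1)) *
              (Polynomial.C (cc q (2 * m + 1) k * s ^ k) * Polynomial.X ^ (2 * m + 1 - 2 * k)) := by
      intro k hk
      rw [Finset.mem_range] at hk
      obtain ⟨d, rfl⟩ : ∃ d, m = k + d := ⟨m - k, by omega⟩
      have hk2 := key q hq0 (2 * d) k
      simp only [show 2 * d + 2 * k + 3 = 2 * (k + d) + 3 by omega,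
        show 2 * d + 2 * k + 2 = 2 * (k + d) + 2 by omega,
        show 2 * d + 2 * k + 1 = 2 * (k + d) + 1 by omega] at hk2
      have hs : cc q (2 * (k + d) + 3) (k + 1) * s ^ (k + 1) =
          cc q (2 * (k + d) + 2) (k + 1) * s ^ (k + 1) -
            (s * qNum q (2 * (k + d) + 2) * q ^ (2 * (k + d) + 1)) *
              (cc q (2 * (k + d) + 1) k * s ^ k) := by
        linear_combination s ^ (k + 1) * hk2
      have hC : (Polynomial.C (cc q (2 * (k + d) + 3) (k + 1) * s ^ (k + 1)) : Polynomial ℝ) =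
          Polynomial.C (cc q (2 * (k + d) + 2) (k + 1) * s ^ (k + 1)) -
            Polynomial.C (s * qNum q (2 * (k + d) + 2) * q ^ (2 * (k + d) + 1)) *
              Polynomial.C (cc q (2 * (k + d) + 1) k * s ^ k) := by
        rw [← map_mul, ← map_sub]; exact congrArg _ hs
      rw [show 2 * (k + d) + 3 - 2 * (k + 1) = 2 * d + 1 by omega,
          show 2 * (k + d) + 2 - 2 * (k + 1) = 2 * d by omega,
          show 2 * (k + d) + 1 - 2 * k = 2 * d + 1 by omega]
      linear_combination (Polynomial.X : Polynomial ℝ) ^ (2 * d + 1) * hC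
    have hsum := Finset.sum_congr rfl hj
    rw [Finset.sum_sub_distrib] at hsum
    linear_combination hsum + h0
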